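/- Weak theorem of alternatives for poly-quadratic detectability: it cannot simultaneously hold that (a) there exist symmetric positive definite matrices P₁,…,P_N ∈ ℝ^{n×n} with P_i − A_iᵀ P_j A_i + CᵀC positive definite for all i,j ∈ {1,…,N}, and (b) there exist symmetric positive semidefinite matrices R₁,…,R_{N²} ∈ ℝ^{n×n}, not all zero, such that Σ_{j=1}^N (A_j R_{N(j−1)+i} A_jᵀ − R_{N(i−1)+j}) is positive semidefinite for every i ∈ {1,…,N}, and C (Σ_{i=1}^{N²} R_i) Cᵀ = 0. -/

import Mathlib

open Matrix

variable {n : ℕ}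

lemma psd_trace_nonneg' {M : Matrix (Fin n) (Fin n) ℝ} (hM : M.PosSemidef) :
    0 ≤ M.trace := by
  rw [Matrix.trace]
  apply Finset.sum_nonneg
  intro i _
  have := hM.diag_nonneg (i := i)
  simpa [dotProduct, Matrix.mulVec, Pi.single_apply, Matrix.diag] using this

lemma trace_mul_psd_nonneg {A B : Matrix (Fin n) (Fin n) ℝ}
    (hA : A.PosSemidef) (hB : B.PosSemidef) : 0 ≤ (A * B).trace := by
  obtain ⟨s, hsB⟩ : ∃ s : Matrix (Fin n) (Fin n) ℝ, B = sᴴ * s := by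
    open scoped MatrixOrder in
    obtain ⟨s, hs⟩ := CStarAlgebra.nonneg_iff_eq_star_mul_self.mp hB.nonneg
    exact ⟨s, hs⟩
  have h2 : (A * B).trace = (s * A * sᴴ).trace := by
    rw [hsB, ← mul_assoc, trace_mul_comm, ← mul_assoc]
  rw [h2]
  exact psd_trace_nonneg' (hA.mul_mul_conjTranspose_same s)

lemma trace_mul_pd_psd_pos {A B : Matrix (Fin n) (Fin n) ℝ}
    (hA : A.PosDef) (hB : B.PosSemidef) (hB0 : B ≠ 0) : 0 < (A * B).trace := by
  obtain ⟨s, hsB⟩ : ∃ s : Matrix (Fin n) (Fin n) ℝ, B = sᴴ * s := by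
    open scoped MatrixOrder in
    obtain ⟨s, hs⟩ := CStarAlgebra.nonneg_iff_eq_star_mul_self.mp hB.nonneg
    exact ⟨s, hs⟩
  have h2 : (A * B).trace = (s * A * sᴴ).trace := by
    rw [hsB, ← mul_assoc, trace_mul_comm, ← mul_assoc]
  have hpsd : (s * A * sᴴ).PosSemidef := hA.posSemidef.mul_mul_conjTranspose_same s
  have hs0 : s ≠ 0 := by
    intro h
    apply hB0
    rw [hsB, h, mul_zero]
  obtain ⟨i0, j0, hij⟩ : ∃ i j, s i j ≠ 0 := by
    by_contra h
    push_neg at h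
    exact hs0 (by ext i j; simp [h])
  set x : Fin n → ℝ := fun k => s i0 k with hx
  have hx0 : x ≠ 0 := by
    intro h
    exact hij (by simpa [hx] using congrFun h j0)
  have hdiag : (s * A * sᴴ) i0 i0 = x ⬝ᵥ A *ᵥ x := by
    simp only [Matrix.mul_apply, dotProduct, Matrix.mulVec,
      Matrix.conjTranspose_apply, hx, Finset.sum_mul, Finset.mul_sum]
    apply Finset.sum_congr rfl
    intro k _
    apply Finset.sum_congr rfl
    intro l _
    have h : A k l = A l k := by
      simpa using congrFun (congrFun hA.isHermitian l) k
    simp only [star_trivial]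
    rw [h]
    ring
  have hpos : 0 < (s * A * sᴴ) i0 i0 := by
    rw [hdiag]
    simpa using hA.dotProduct_mulVec_pos hx0
  rw [h2, Matrix.trace]
  have hnn : ∀ k, 0 ≤ (s * A * sᴴ).diag k := by
    intro k
    have := hpsd.diag_nonneg (i := k)
    simpa [dotProduct, Matrix.mulVec, Pi.single_apply, Matrix.diag] using this
  calc (0:ℝ) < (s * A * sᴴ) i0 i0 := hpos
    _ ≤ ∑ k, (s * A * sᴴ).diag k :=
        Finset.single_le_sum (fun k _ => hnn k) (Finset.mem_univ i0)

/-- `R j i` stands for `R_{N(j-1)+i}` of the paper. -/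
theorem weak_toa_poly_q_detectability {n m N : ℕ}
    (A : Fin N → Matrix (Fin n) (Fin n) ℝ) (C : Matrix (Fin m) (Fin n) ℝ) :
    ¬ ((∃ P : Fin N → Matrix (Fin n) (Fin n) ℝ,
        (∀ i, (P i).IsSymm ∧ (P i).PosDef) ∧
        ∀ i j, (P i - (A i)ᵀ * P j * A i + Cᵀ * C).PosDef) ∧
      (∃ R : Fin N → Fin N → Matrix (Fin n) (Fin n) ℝ,
        (∀ j i, (R j i).IsSymm ∧ (R j i).PosSemidef) ∧
        (¬ ∀ j i, R j i = 0) ∧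
        (∀ i, (∑ j, (A j * R j i * (A j)ᵀ - R i j)).PosSemidef) ∧
        C * (∑ j, ∑ i, R j i) * Cᵀ = 0)) := by
  rintro ⟨⟨P, hP, hPD⟩, R, hR, hR0, hS, hC⟩
  push_neg at hR0
  obtain ⟨i0, j0, h0⟩ := hR0
  -- the key scalar quantity
  set t : ℝ := ∑ i, ∑ j, ((P i - (A i)ᵀ * P j * A i + Cᵀ * C) * R i j).trace with ht
  -- t > 0
  have ht_pos : 0 < t := by
    rw [ht]
    apply Finset.sum_pos'
    · intro i _
      apply Finset.sum_nonneg
      intro j _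
      exact trace_mul_psd_nonneg (hPD i j).posSemidef (hR i j).2
    · refine ⟨i0, Finset.mem_univ i0, ?_⟩
      apply Finset.sum_pos'
      · intro j _
        exact trace_mul_psd_nonneg (hPD i0 j).posSemidef (hR i0 j).2
      · exact ⟨j0, Finset.mem_univ j0, trace_mul_pd_psd_pos (hPD i0 j0) (hR i0 j0).2 h0⟩
  -- cyclic trace rearrangement
  have cyc : ∀ i j, ((A i)ᵀ * P j * A i * R i j).trace
      = (P j * (A i * R i j * (A i)ᵀ)).trace := by
    intro i j
    simp only [Matrix.mul_assoc]
    rw [Matrix.trace_mul_comm]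
    simp only [Matrix.mul_assoc]
  have key : ∀ i j, ((P i - (A i)ᵀ * P j * A i + Cᵀ * C) * R i j).trace
      = (P i * R i j).trace - (P j * (A i * R i j * (A i)ᵀ)).trace
        + ((Cᵀ * C) * R i j).trace := by
    intro i j
    rw [Matrix.add_mul, Matrix.sub_mul, trace_add, trace_sub, cyc]
  have e1 : ∀ i, (P i * ∑ j, (A j * R j i * (A j)ᵀ - R i j)).trace
      = ∑ j, ((P i * (A j * R j i * (A j)ᵀ)).trace - (P i * R i j).trace) := by
    intro i
    rw [Finset.mul_sum, trace_sum]
    apply Finset.sum_congr rfl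
    intro j _
    rw [mul_sub, trace_sub]
  have swap : ∑ i, ∑ j, (P j * (A i * R i j * (A i)ᵀ)).trace
      = ∑ i, ∑ j, (P i * (A j * R j i * (A j)ᵀ)).trace := Finset.sum_comm
  have hCC : ∑ i, ∑ j, ((Cᵀ * C) * R i j).trace = 0 := by
    have h1 : ∑ i, ∑ j, ((Cᵀ * C) * R i j).trace
        = ((Cᵀ * C) * ∑ i, ∑ j, R i j).trace := by
      simp [Finset.mul_sum, trace_sum]
    rw [h1, Matrix.mul_assoc, trace_mul_comm, hC, trace_zero]
  have hge : 0 ≤ ∑ i, (P i * ∑ j, (A j * R j i * (A j)ᵀ - R i j)).trace :=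
    Finset.sum_nonneg fun i _ => trace_mul_psd_nonneg (hP i).2.posSemidef (hS i)
  have main : t + ∑ i, (P i * ∑ j, (A j * R j i * (A j)ᵀ - R i j)).trace
      = ∑ i, ∑ j, ((Cᵀ * C) * R i j).trace := by
    rw [ht]
    have e2 : ∑ i, (P i * ∑ j, (A j * R j i * (A j)ᵀ - R i j)).trace
        = ∑ i, ∑ j, ((P i * (A j * R j i * (A j)ᵀ)).trace - (P i * R i j).trace) :=
      Finset.sum_congr rfl fun i _ => e1 i
    rw [e2]
    simp only [key, Finset.sum_sub_distrib, Finset.sum_add_distrib]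
    rw [swap]
    ring
  rw [hCC] at main
  linarith
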